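/- arXiv:1711.05545 — 2 statements merged into one kernel-verified Lean document; each statement's English description precedes it below -/
import Mathlib

section
/- Let 𝒜 be a commutative semisimple finite-dimensional ℚ-algebra acting on a finite-dimensional ℚ-vector space V (i.e., V is an 𝒜-module), and let U be a ℂ-subspace of V ⊗_ℚ ℂ invariant under the ℂ-linear extension of the 𝒜-action, such that V ⊗_ℚ ℂ is the internal direct sum of U and σ(U). For each ℚ-algebra homomorphism τ : 𝒜 → ℂ, let V_τ := {v ∈ V ⊗_ℚ ℂ : a·v = τ(a)·v for all a ∈ 𝒜}. Then the only ℂ-linear map σ(U) → U commuting with the action of every element of 𝒜 is the zero map if and only if for every ℚ-algebra homomorphism τ : 𝒜 → ℂ at least one of the subspaces U ∩ V_τ and σ(U) ∩ V_τ is zero. -/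
open scoped TensorProduct

noncomputable section

instance : RingHomSurjective (starRingEnd ℂ) :=
  ⟨fun z => ⟨star z, by simp⟩⟩

/-- Complex conjugation as a `ℚ`-linear map on `ℂ`. -/
def conjQLin : ℂ →ₗ[ℚ] ℂ where
  toFun z := (starRingEnd ℂ) z
  map_add' := by intros; simp
  map_smul' := by intro q z; simp [Rat.smul_def, map_mul]

/-- The antilinear involution `σ` on `ℂ ⊗[ℚ] V` determined by conjugation on the
first factor, packaged as a `starRingEnd ℂ`-semilinear map. -/
def sigmaV (V : Type*) [AddCommGroup V] [Module ℚ V] :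
    (ℂ ⊗[ℚ] V) →ₛₗ[starRingEnd ℂ] (ℂ ⊗[ℚ] V) where
  toFun := TensorProduct.map conjQLin LinearMap.id
  map_add' := map_add _
  map_smul' c x := by
    induction x using TensorProduct.induction_on with
    | zero => simp
    | tmul z v =>
        simp [TensorProduct.smul_tmul', smul_eq_mul, conjQLin, map_mul]
    | add x y hx hy =>
        simp only [smul_add, map_add]
        exact congrArg₂ (· + ·) hx hy

/-- `σ(U)`, the image of a `ℂ`-subspace `U` of `ℂ ⊗[ℚ] V` under the conjugation
involution; it is again a `ℂ`-subspace. -/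
def sigmaSub {V : Type*} [AddCommGroup V] [Module ℚ V]
    (U : Submodule ℂ (ℂ ⊗[ℚ] V)) : Submodule ℂ (ℂ ⊗[ℚ] V) :=
  U.map (sigmaV V)

/-- A `ℂ`-linear map `f : P → Q` between subspaces of `ℂ ⊗[ℚ] V` commutes with an
operator `T` of the ambient space. -/
def CommutesWith {V : Type*} [AddCommGroup V] [Module ℚ V]
    (P Q : Submodule ℂ (ℂ ⊗[ℚ] V)) (f : P →ₗ[ℂ] Q)
    (T : (ℂ ⊗[ℚ] V) →ₗ[ℂ] (ℂ ⊗[ℚ] V)) : Prop :=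
  ∀ (x : P) (hx : T ↑x ∈ P), (f ⟨T ↑x, hx⟩ : ℂ ⊗[ℚ] V) = T ↑(f x)

/-- `E` is a polarization of the weight-one rational Hodge structure `(V, U)`:
it is alternating, its `ℂ`-bilinear extension vanishes on `U × U`, and
`-i·E_ℂ(u, σ u)` is a positive real for every nonzero `u ∈ U`. -/
def IsPolarization {V : Type*} [AddCommGroup V] [Module ℚ V]
    (U : Submodule ℂ (ℂ ⊗[ℚ] V)) (E : V →ₗ[ℚ] V →ₗ[ℚ] ℚ) : Prop :=
  (∀ x : V, E x x = 0) ∧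
  (∀ u ∈ U, ∀ u' ∈ U, LinearMap.BilinForm.baseChange ℂ E u u' = 0) ∧
  (∀ u ∈ U, u ≠ 0 → ∃ r : ℝ, 0 < r ∧
    -Complex.I * LinearMap.BilinForm.baseChange ℂ E u (sigmaV V u) = (r : ℂ))


/-- Scalar multiplication by `a : 𝒜` as a `ℚ`-linear endomorphism of `V`. -/
def smulLin (𝒜 : Type*) [CommRing 𝒜] [Algebra ℚ 𝒜]
    (V : Type*) [AddCommGroup V] [Module ℚ V] [Module 𝒜 V] [IsScalarTower ℚ 𝒜 V]
    (a : 𝒜) : V →ₗ[ℚ] V where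
  toFun v := a • v
  map_add' := smul_add a
  map_smul' q v := smul_comm a q v

/-- The `τ`-eigenspace of the `𝒜`-action on `ℂ ⊗[ℚ] V`: the subspace of vectors on
which every `a : 𝒜` acts as multiplication by `τ(a)`. -/
def eigenspaceOf (𝒜 : Type*) [CommRing 𝒜] [Algebra ℚ 𝒜]
    (V : Type*) [AddCommGroup V] [Module ℚ V] [Module 𝒜 V] [IsScalarTower ℚ 𝒜 V]
    (τ : 𝒜 →ₐ[ℚ] ℂ) : Submodule ℂ (ℂ ⊗[ℚ] V) :=
  ⨅ a : 𝒜, LinearMap.ker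
    (LinearMap.baseChange ℂ (smulLin 𝒜 V a) - τ a • LinearMap.id)

section AuxRho

variable (𝒜 : Type*) [CommRing 𝒜] [Algebra ℚ 𝒜]
variable (V : Type*) [AddCommGroup V] [Module ℚ V] [Module 𝒜 V] [IsScalarTower ℚ 𝒜 V]

/-- The `𝒜`-action on `ℂ ⊗[ℚ] V` as a `ℚ`-algebra homomorphism into endomorphisms. -/
def actAlg : 𝒜 →ₐ[ℚ] Module.End ℂ (ℂ ⊗[ℚ] V) where
  toFun a := LinearMap.baseChange ℂ (smulLin 𝒜 V a)
  map_one' := by ext v; simp [smulLin]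
  map_mul' a b := by ext v; simp [smulLin, Module.End.mul_apply, mul_smul]
  map_zero' := by ext v; simp [smulLin]
  map_add' a b := by ext v; simp [smulLin, add_smul, TensorProduct.tmul_add]
  commutes' q := by ext v; simp [smulLin, Module.algebraMap_end_apply, algebraMap_smul,
    TensorProduct.tmul_smul]

/-- The `ℂ ⊗[ℚ] 𝒜`-action on `ℂ ⊗[ℚ] V`. -/
def rho : (ℂ ⊗[ℚ] 𝒜) →ₐ[ℂ] Module.End ℂ (ℂ ⊗[ℚ] V) :=
  Algebra.TensorProduct.lift (Algebra.ofId ℂ _) (actAlg 𝒜 V)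
    (fun z a => Algebra.commutes z _)

lemma rho_tmul (z : ℂ) (a : 𝒜) :
    rho 𝒜 V (z ⊗ₜ a) = z • LinearMap.baseChange ℂ (smulLin 𝒜 V a) := by
  simp [rho, actAlg, Algebra.TensorProduct.lift_tmul, Algebra.ofId_apply,
    Algebra.algebraMap_eq_smul_one, smul_mul_assoc]

lemma rho_one_tmul (a : 𝒜) :
    rho 𝒜 V ((1 : ℂ) ⊗ₜ a) = LinearMap.baseChange ℂ (smulLin 𝒜 V a) := by
  rw [rho_tmul, one_smul]

/-- `ℂ`-linear extension of `τ` to the complexification. -/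
def tauHat (τ : 𝒜 →ₐ[ℚ] ℂ) : (ℂ ⊗[ℚ] 𝒜) →ₐ[ℂ] ℂ :=
  Algebra.TensorProduct.lift (AlgHom.id ℂ ℂ) τ (fun _ _ => Commute.all _ _)

lemma tauHat_tmul (τ : 𝒜 →ₐ[ℚ] ℂ) (z : ℂ) (a : 𝒜) :
    tauHat 𝒜 τ (z ⊗ₜ a) = z * τ a := by
  simp [tauHat, Algebra.TensorProduct.lift_tmul]

/-- Restriction of a character of the complexification back to `𝒜`. -/
def algRestrict (τh : (ℂ ⊗[ℚ] 𝒜) →ₐ[ℂ] ℂ) : 𝒜 →ₐ[ℚ] ℂ :=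
  (τh.restrictScalars ℚ).comp Algebra.TensorProduct.includeRight

lemma algRestrict_apply (τh : (ℂ ⊗[ℚ] 𝒜) →ₐ[ℂ] ℂ) (a : 𝒜) :
    algRestrict 𝒜 τh a = τh ((1:ℂ) ⊗ₜ a) := rfl

lemma mem_eigenspaceOf_iff (τ : 𝒜 →ₐ[ℚ] ℂ) (x : ℂ ⊗[ℚ] V) :
    x ∈ eigenspaceOf 𝒜 V τ ↔
      ∀ a : 𝒜, LinearMap.baseChange ℂ (smulLin 𝒜 V a) x = τ a • x := by
  simp [eigenspaceOf, Submodule.mem_iInf, LinearMap.mem_ker, LinearMap.sub_apply,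
    sub_eq_zero]

lemma sigma_baseChange (a : 𝒜) (x : ℂ ⊗[ℚ] V) :
    sigmaV V (LinearMap.baseChange ℂ (smulLin 𝒜 V a) x)
      = LinearMap.baseChange ℂ (smulLin 𝒜 V a) (sigmaV V x) := by
  induction x using TensorProduct.induction_on with
  | zero => simp
  | tmul z v => simp [sigmaV, smulLin, conjQLin]
  | add x y hx hy => simp only [map_add, hx, hy]

variable {𝒜 V}

lemma U_inv {U : Submodule ℂ (ℂ ⊗[ℚ] V)}
    (hinv : ∀ a : 𝒜, ∀ x ∈ U, LinearMap.baseChange ℂ (smulLin 𝒜 V a) x ∈ U)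
    (b : ℂ ⊗[ℚ] 𝒜) : ∀ x ∈ U, rho 𝒜 V b x ∈ U := by
  induction b using TensorProduct.induction_on with
  | zero => intro x hx; simp only [map_zero, LinearMap.zero_apply]; exact U.zero_mem
  | tmul z a =>
      intro x hx
      rw [rho_tmul]
      exact U.smul_mem z (hinv a x hx)
  | add b c hb hc =>
      intro x hx
      simp only [map_add, LinearMap.add_apply]
      exact U.add_mem (hb x hx) (hc x hx)

lemma sigmaSub_inv {U : Submodule ℂ (ℂ ⊗[ℚ] V)}
    (hinv : ∀ a : 𝒜, ∀ x ∈ U, LinearMap.baseChange ℂ (smulLin 𝒜 V a) x ∈ U)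
    (b : ℂ ⊗[ℚ] 𝒜) : ∀ x ∈ sigmaSub U, rho 𝒜 V b x ∈ sigmaSub U := by
  induction b using TensorProduct.induction_on with
  | zero => intro x hx; simp only [map_zero, LinearMap.zero_apply]; exact Submodule.zero_mem _
  | tmul z a =>
      rintro x ⟨u, hu, rfl⟩
      rw [rho_tmul]
      refine ⟨(starRingEnd ℂ) z • LinearMap.baseChange ℂ (smulLin 𝒜 V a) u,
        Submodule.smul_mem _ _ (hinv a u hu), ?_⟩
      rw [LinearMap.map_smulₛₗ, Complex.conj_conj, LinearMap.smul_apply, sigma_baseChange]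
  | add b c hb hc =>
      intro x hx
      simp only [map_add, LinearMap.add_apply]
      exact Submodule.add_mem _ (hb x hx) (hc x hx)

end AuxRho

section AuxMain

variable {𝒜 : Type*} [CommRing 𝒜] [Algebra ℚ 𝒜]
variable {V : Type*} [AddCommGroup V] [Module ℚ V] [Module 𝒜 V] [IsScalarTower ℚ 𝒜 V]

/-- Equivariance of `f` with respect to each `a : 𝒜` extends to the whole of `ℂ ⊗[ℚ] 𝒜`. -/
lemma comm_ext {U : Submodule ℂ (ℂ ⊗[ℚ] V)}
    (hinv : ∀ a : 𝒜, ∀ x ∈ U, LinearMap.baseChange ℂ (smulLin 𝒜 V a) x ∈ U)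
    (f : sigmaSub U →ₗ[ℂ] U)
    (hcomm : ∀ a : 𝒜, CommutesWith (sigmaSub U) U f (LinearMap.baseChange ℂ (smulLin 𝒜 V a)))
    (b : ℂ ⊗[ℚ] 𝒜) (x : sigmaSub U) (hx : rho 𝒜 V b ↑x ∈ sigmaSub U) :
    (f ⟨rho 𝒜 V b ↑x, hx⟩ : ℂ ⊗[ℚ] V) = rho 𝒜 V b ↑(f x) := by
  induction b using TensorProduct.induction_on with
  | zero =>
      have h0 : (⟨rho 𝒜 V 0 ↑x, hx⟩ : sigmaSub U) = 0 := by
        ext; simp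
      rw [h0, map_zero]; simp
  | tmul z a =>
      have hTa : LinearMap.baseChange ℂ (smulLin 𝒜 V a) ↑x ∈ sigmaSub U := by
        have := sigmaSub_inv hinv ((1:ℂ) ⊗ₜ a) ↑x x.2
        rwa [rho_one_tmul] at this
      have h1 : (⟨rho 𝒜 V (z ⊗ₜ a) ↑x, hx⟩ : sigmaSub U)
          = z • ⟨LinearMap.baseChange ℂ (smulLin 𝒜 V a) ↑x, hTa⟩ := by
        ext; simp [rho_tmul]
      rw [h1, map_smul]
      push_cast [Submodule.coe_smul]
      rw [hcomm a x hTa, rho_tmul]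
      simp
  | add b c hb hc =>
      have hbm := sigmaSub_inv hinv b ↑x x.2
      have hcm := sigmaSub_inv hinv c ↑x x.2
      have h2 : (⟨rho 𝒜 V (b + c) ↑x, hx⟩ : sigmaSub U)
          = ⟨rho 𝒜 V b ↑x, hbm⟩ + ⟨rho 𝒜 V c ↑x, hcm⟩ := by
        ext; simp
      rw [h2, map_add]
      push_cast [Submodule.coe_add]
      rw [hb hbm, hc hcm]
      simp

lemma eigen_rho {τ : 𝒜 →ₐ[ℚ] ℂ} {u : ℂ ⊗[ℚ] V} (hu : u ∈ eigenspaceOf 𝒜 V τ)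
    (b : ℂ ⊗[ℚ] 𝒜) : rho 𝒜 V b u = tauHat 𝒜 τ b • u := by
  rw [mem_eigenspaceOf_iff] at hu
  induction b using TensorProduct.induction_on with
  | zero => simp
  | tmul z a => rw [rho_tmul, tauHat_tmul, LinearMap.smul_apply, hu a, smul_smul]
  | add b c hb hc => simp only [map_add, LinearMap.add_apply, hb, hc, add_smul]

/-- Existence of the quasi-idempotent attached to a character, from semisimplicity. -/
lemma exists_e [IsSemisimpleRing (ℂ ⊗[ℚ] 𝒜)] (τh : (ℂ ⊗[ℚ] 𝒜) →ₐ[ℂ] ℂ) :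
    ∃ e : ℂ ⊗[ℚ] 𝒜, (∀ b, b * e = algebraMap ℂ (ℂ ⊗[ℚ] 𝒜) (τh b) * e) ∧ τh e = 1 := by
  set m : Ideal (ℂ ⊗[ℚ] 𝒜) := RingHom.ker τh with hm
  obtain ⟨c, hc⟩ := exists_isCompl m
  obtain ⟨n, hn, e, he, hne⟩ := Submodule.mem_sup.mp
    (by rw [hc.sup_eq_top]; trivial : (1 : ℂ ⊗[ℚ] 𝒜) ∈ m ⊔ c)
  have hme : ∀ x ∈ m, x * e = 0 := by
    intro x hxm
    have h1 : x * e = x - x * n := by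
      have h := congrArg (x * ·) hne
      simp only [mul_one, mul_add] at h
      exact eq_sub_of_add_eq' h
    have hxc : x * e ∈ c := Ideal.mul_mem_left c x he
    have hxm' : x * e ∈ m := by
      rw [h1]; exact Submodule.sub_mem m hxm (Ideal.mul_mem_right n m hxm)
    have : x * e ∈ m ⊓ c := ⟨hxm', hxc⟩
    rwa [hc.inf_eq_bot, Submodule.mem_bot] at this
  refine ⟨e, fun b => ?_, ?_⟩
  · have hker : b - algebraMap ℂ _ (τh b) ∈ m := by
      rw [hm, RingHom.mem_ker, map_sub, AlgHom.commutes]; simp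
    have h := hme _ hker
    rw [sub_mul] at h
    exact sub_eq_zero.mp h
  · have : τh n = 0 := by rwa [← RingHom.mem_ker, ← hm]
    have h1 := congrArg τh hne
    rw [map_add, map_one, this, zero_add] at h1
    exact h1

lemma rho_e_eigen {e : ℂ ⊗[ℚ] 𝒜} (τh : (ℂ ⊗[ℚ] 𝒜) →ₐ[ℂ] ℂ)
    (he1 : ∀ b, b * e = algebraMap ℂ (ℂ ⊗[ℚ] 𝒜) (τh b) * e)
    (x : ℂ ⊗[ℚ] V) : rho 𝒜 V e x ∈ eigenspaceOf 𝒜 V (algRestrict 𝒜 τh) := by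
  rw [mem_eigenspaceOf_iff]
  intro a
  have h1 : LinearMap.baseChange ℂ (smulLin 𝒜 V a) (rho 𝒜 V e x)
      = rho 𝒜 V (((1:ℂ) ⊗ₜ a) * e) x := by
    rw [map_mul, rho_one_tmul, Module.End.mul_apply]
  rw [h1, he1 ((1:ℂ) ⊗ₜ a), map_mul, AlgHom.commutes, Module.End.mul_apply,
    Module.algebraMap_end_apply, algRestrict_apply]

end AuxMain

section AuxSemisimple

/-- A commutative semisimple ring has no square-zero elements. -/
theorem sq_zero_eq_zero' {A : Type*} [CommRing A] [IsSemisimpleRing A]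
    {x : A} (hx : x ^ 2 = 0) : x = 0 := by
  obtain ⟨c, hc⟩ := exists_isCompl (Ideal.span {x} : Ideal A)
  obtain ⟨i, hi, m, hm, him⟩ := Submodule.mem_sup.mp
    (by rw [hc.sup_eq_top]; trivial : (1:A) ∈ (Ideal.span {x} : Ideal A) ⊔ c)
  obtain ⟨a, rfl⟩ := Ideal.mem_span_singleton'.mp hi
  have h1 : x = x * (a * x) + x * m := by rw [← mul_add, him, mul_one]
  have h2 : x * (a * x) = 0 := by rw [mul_comm a x, ← mul_assoc, ← pow_two, hx, zero_mul]
  have hxc : x ∈ c := by rw [h1, h2, zero_add]; exact Ideal.mul_mem_left c x hm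
  have : x ∈ (Ideal.span {x} : Ideal A) ⊓ c := ⟨Ideal.subset_span rfl, hxc⟩
  rwa [hc.inf_eq_bot, Ideal.mem_bot] at this

/-- A commutative semisimple ring is reduced. -/
theorem isReduced_of_isSemisimpleRing (A : Type*) [CommRing A] [IsSemisimpleRing A] :
    IsReduced A := by
  constructor
  rintro x ⟨n, hn⟩
  induction n using Nat.strong_induction_on generalizing x with
  | _ n ih =>
    match n, hn with
    | 0, hn => have : Subsingleton A := subsingleton_of_zero_eq_one (by simpa using hn.symm)
               exact Subsingleton.elim _ _
    | 1, hn => simpa using hn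
    | (m+2), hn =>
      have hk : (m+2+1)/2 < m+2 := by omega
      refine ih _ hk x (sq_zero_eq_zero' ?_)
      rw [← pow_mul]
      have h2 : (m+2+1)/2 * 2 = (m + 2) + ((m+2+1)/2*2 - (m+2)) := by omega
      rw [h2, pow_add, hn, zero_mul]

/-- A reduced finite-dimensional commutative `ℚ`-algebra (in `Type 0`) is
formally unramified. -/
theorem formallyUnramified_rat (A : Type) [CommRing A] [Algebra ℚ A]
    [FiniteDimensional ℚ A] [IsReduced A] :
    Algebra.FormallyUnramified ℚ A := by
  have : IsArtinianRing A := isArtinian_of_tower ℚ (inferInstance : IsArtinian ℚ A)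
  have fin : Finite (MaximalSpectrum A) := inferInstance
  letI : ∀ I : MaximalSpectrum A, Field (A ⧸ I.asIdeal) :=
    fun I => IsArtinianRing.fieldOfSubtypeIsMaximal A I
  have hsep : ∀ I : MaximalSpectrum A, Algebra.FormallyUnramified ℚ (A ⧸ I.asIdeal) := by
    intro I
    haveI : Algebra.IsIntegral ℚ (A ⧸ I.asIdeal) := Algebra.IsIntegral.of_finite ℚ _
    haveI : Algebra.IsSeparable ℚ (A ⧸ I.asIdeal) := Algebra.IsSeparable.of_integral ℚ _
    exact Algebra.FormallyUnramified.of_isSeparable ℚ _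
  have hpi : Algebra.FormallyUnramified ℚ (∀ I : MaximalSpectrum A, A ⧸ I.asIdeal) :=
    (Algebra.FormallyUnramified.pi_iff _).mpr hsep
  have e : A ≃ₐ[ℚ] (∀ I : MaximalSpectrum A, A ⧸ I.asIdeal) :=
    AlgEquiv.ofRingEquiv (f := (IsArtinianRing.equivPi A).toRingEquiv)
      (fun q => by
        have := congrFun (congrArg DFunLike.coe (Subsingleton.elim
          ((IsArtinianRing.equivPi A).toRingEquiv.toRingHom.comp (algebraMap ℚ A))
          (algebraMap ℚ _))) q
        simpa using this)
  exact (Algebra.FormallyUnramified.iff_of_equiv e).mpr hpi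

/-- The complexification of a commutative semisimple finite-dimensional `ℚ`-algebra
is semisimple. -/
theorem isSemisimpleRing_complexification (𝒜 : Type*) [CommRing 𝒜] [Algebra ℚ 𝒜]
    [FiniteDimensional ℚ 𝒜] [IsSemisimpleRing 𝒜] :
    IsSemisimpleRing (ℂ ⊗[ℚ] 𝒜) := by
  haveI : IsReduced 𝒜 := isReduced_of_isSemisimpleRing 𝒜
  haveI : Small.{0} 𝒜 :=
    small_of_injective ((Module.finBasis ℚ 𝒜).equivFun.toEquiv.injective)
  have ea : Shrink.{0} 𝒜 ≃ₐ[ℚ] 𝒜 := Shrink.algEquiv ℚ 𝒜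
  haveI : FiniteDimensional ℚ (Shrink.{0} 𝒜) := Module.Finite.equiv (Shrink.linearEquiv ℚ 𝒜).symm
  haveI : IsReduced (Shrink.{0} 𝒜) :=
    isReduced_of_injective ea.toRingEquiv.toRingHom ea.toRingEquiv.injective
  haveI := formallyUnramified_rat (Shrink.{0} 𝒜)
  haveI : IsReduced (ℂ ⊗[ℚ] Shrink.{0} 𝒜) :=
    Algebra.FormallyUnramified.isReduced_of_field ℂ _
  have e2 : (ℂ ⊗[ℚ] 𝒜) ≃ₐ[ℚ] (ℂ ⊗[ℚ] Shrink.{0} 𝒜) :=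
    Algebra.TensorProduct.congr AlgEquiv.refl ea.symm
  haveI : IsReduced (ℂ ⊗[ℚ] 𝒜) :=
    isReduced_of_injective e2.toRingEquiv.toRingHom e2.toRingEquiv.injective
  haveI : IsArtinianRing (ℂ ⊗[ℚ] 𝒜) :=
    isArtinian_of_tower ℂ (inferInstance : IsArtinian ℂ (ℂ ⊗[ℚ] 𝒜))
  exact IsArtinianRing.isSemisimpleRing_of_isReduced (ℂ ⊗[ℚ] 𝒜)

/-- The character attached to a maximal ideal of a finite-dimensional commutative
`ℂ`-algebra. -/
theorem exists_char_of_maximal (𝒜 : Type*) [CommRing 𝒜] [Algebra ℚ 𝒜]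
    [FiniteDimensional ℚ 𝒜] (m : Ideal (ℂ ⊗[ℚ] 𝒜)) [m.IsMaximal] :
    ∃ τh : (ℂ ⊗[ℚ] 𝒜) →ₐ[ℂ] ℂ, m ≤ RingHom.ker τh := by
  letI : Field ((ℂ ⊗[ℚ] 𝒜) ⧸ m) := Ideal.Quotient.field m
  haveI : Algebra.IsIntegral ℂ ((ℂ ⊗[ℚ] 𝒜) ⧸ m) := Algebra.IsIntegral.of_finite ℂ _
  haveI : Algebra.IsAlgebraic ℂ ((ℂ ⊗[ℚ] 𝒜) ⧸ m) := inferInstance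
  have hsurj : Function.Surjective (algebraMap ℂ ((ℂ ⊗[ℚ] 𝒜) ⧸ m)) :=
    (IsAlgClosed.algebraMap_bijective_of_isIntegral (k := ℂ)).2
  have hbij : Function.Bijective (Algebra.ofId ℂ ((ℂ ⊗[ℚ] 𝒜) ⧸ m)) :=
    ⟨(algebraMap ℂ _).injective, hsurj⟩
  let ψ := AlgEquiv.ofBijective _ hbij
  refine ⟨(ψ.symm.toAlgHom.comp (Ideal.Quotient.mkₐ ℂ m)), fun b hb => ?_⟩
  rw [RingHom.mem_ker]
  simp only [AlgHom.coe_comp, Function.comp_apply, Ideal.Quotient.mkₐ_eq_mk,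
    Ideal.Quotient.eq_zero_iff_mem.mpr hb, map_zero]

end AuxSemisimple

section AuxAnn

variable {𝒜 : Type*} [CommRing 𝒜] [Algebra ℚ 𝒜]
variable {V : Type*} [AddCommGroup V] [Module ℚ V] [Module 𝒜 V] [IsScalarTower ℚ 𝒜 V]

/-- The annihilator of a vector in `ℂ ⊗[ℚ] V` as an ideal of `ℂ ⊗[ℚ] 𝒜`. -/
def annIdeal (𝒜 : Type*) [CommRing 𝒜] [Algebra ℚ 𝒜]
    (V : Type*) [AddCommGroup V] [Module ℚ V] [Module 𝒜 V] [IsScalarTower ℚ 𝒜 V]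
    (y : ℂ ⊗[ℚ] V) : Ideal (ℂ ⊗[ℚ] 𝒜) where
  carrier := {b | rho 𝒜 V b y = 0}
  add_mem' := by
    intro a b ha hb
    simp only [Set.mem_setOf_eq, map_add, LinearMap.add_apply] at *
    rw [ha, hb, add_zero]
  zero_mem' := by simp
  smul_mem' := by
    intro c b hb
    simp only [Set.mem_setOf_eq, smul_eq_mul, map_mul, Module.End.mul_apply] at *
    rw [hb, map_zero]

lemma mem_annIdeal_iff (y : ℂ ⊗[ℚ] V) (b : ℂ ⊗[ℚ] 𝒜) :
    b ∈ annIdeal 𝒜 V y ↔ rho 𝒜 V b y = 0 := Iff.rfl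

lemma exists_dual_one {M : Type*} [AddCommGroup M] [Module ℂ M] (w : M) (hw : w ≠ 0) :
    ∃ ψ : M →ₗ[ℂ] ℂ, ψ w = 1 := by
  by_contra h
  push_neg at h
  have h2 : ∀ φ : M →ₗ[ℂ] ℂ, φ w = 0 := by
    intro φ
    by_contra hφ
    exact h ((φ w)⁻¹ • φ) (by simp [inv_mul_cancel₀ hφ])
  exact hw ((Module.forall_dual_apply_eq_zero_iff ℂ w).mp h2)

end AuxAnn


/-- Rigidity of the action of a commutative semisimple `ℚ`-algebra `𝒜` on a weight-one
rational Hodge structure is equivalent to the condition that, for each `ℚ`-algebra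
homomorphism `τ : 𝒜 → ℂ`, at least one of `U ∩ V_τ` and `σ(U) ∩ V_τ` vanishes. -/
theorem rigid_iff_eigenspaces_separated
    (𝒜 : Type*) [CommRing 𝒜] [Algebra ℚ 𝒜] [FiniteDimensional ℚ 𝒜] [IsSemisimpleRing 𝒜]
    (V : Type*) [AddCommGroup V] [Module ℚ V] [FiniteDimensional ℚ V]
    [Module 𝒜 V] [IsScalarTower ℚ 𝒜 V]
    (U : Submodule ℂ (ℂ ⊗[ℚ] V))
    (hinv : ∀ a : 𝒜, ∀ x ∈ U, LinearMap.baseChange ℂ (smulLin 𝒜 V a) x ∈ U)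
    (hcompl : IsCompl U (sigmaSub U)) :
    (∀ f : sigmaSub U →ₗ[ℂ] U,
        (∀ a : 𝒜, CommutesWith (sigmaSub U) U f
          (LinearMap.baseChange ℂ (smulLin 𝒜 V a))) → f = 0) ↔
      (∀ τ : 𝒜 →ₐ[ℚ] ℂ,
        U ⊓ eigenspaceOf 𝒜 V τ = ⊥ ∨ sigmaSub U ⊓ eigenspaceOf 𝒜 V τ = ⊥) := by

  haveI hss : IsSemisimpleRing (ℂ ⊗[ℚ] 𝒜) := isSemisimpleRing_complexification 𝒜
  constructor
  · -- rigidity implies separation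
    intro hrigid τ
    by_contra hcon
    push_neg at hcon
    obtain ⟨h1, h2⟩ := hcon
    obtain ⟨u, hu, hune⟩ := Submodule.ne_bot_iff _ |>.mp h1
    obtain ⟨w, hw, hwne⟩ := Submodule.ne_bot_iff _ |>.mp h2
    obtain ⟨huU, huE⟩ := Submodule.mem_inf.mp hu
    obtain ⟨hwS, hwE⟩ := Submodule.mem_inf.mp hw
    obtain ⟨e, he1, he2⟩ := exists_e (𝒜 := 𝒜) (tauHat 𝒜 τ)
    obtain ⟨ψ, hψ⟩ := exists_dual_one w hwne
    -- build a nonzero equivariant map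
    set f : sigmaSub U →ₗ[ℂ] U :=
      { toFun := fun x => ψ (rho 𝒜 V e ↑x) • (⟨u, huU⟩ : U)
        map_add' := by intro x y; simp [add_smul]
        map_smul' := by intro c x; simp [mul_smul] } with hf
    have hfcomm : ∀ a : 𝒜, CommutesWith (sigmaSub U) U f
        (LinearMap.baseChange ℂ (smulLin 𝒜 V a)) := by
      intro a x hx
      have key : rho 𝒜 V e (LinearMap.baseChange ℂ (smulLin 𝒜 V a) ↑x)
          = τ a • rho 𝒜 V e ↑x := by
        rw [← rho_one_tmul 𝒜 V a, ← Module.End.mul_apply, ← map_mul,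
          mul_comm e _, he1, map_mul, Module.End.mul_apply, AlgHom.commutes,
          Module.algebraMap_end_apply, tauHat_tmul, one_mul]
      have hTa : LinearMap.baseChange ℂ (smulLin 𝒜 V a) u = τ a • u :=
        (mem_eigenspaceOf_iff 𝒜 V τ u).mp huE a
      show ψ (rho 𝒜 V e (LinearMap.baseChange ℂ (smulLin 𝒜 V a) ↑x)) • u
          = LinearMap.baseChange ℂ (smulLin 𝒜 V a) (ψ (rho 𝒜 V e ↑x) • u)
      rw [key, map_smul, smul_eq_mul, map_smul, hTa, mul_smul, smul_comm]
    have hf0 := hrigid f hfcomm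
    have : f ⟨w, hwS⟩ = ⟨u, huU⟩ := by
      have hew : rho 𝒜 V e w = w := by
        rw [eigen_rho hwE, he2, one_smul]
      show ψ (rho 𝒜 V e w) • (⟨u, huU⟩ : U) = ⟨u, huU⟩
      rw [hew, hψ, one_smul]
    rw [hf0] at this
    exact hune (by simpa using congrArg (Subtype.val) this.symm)
  · -- separation implies rigidity
    intro hsep f hcomm
    by_contra hfne
    obtain ⟨x₀, hx₀⟩ : ∃ x₀, f x₀ ≠ 0 := by
      by_contra h
      push_neg at h
      exact hfne (LinearMap.ext fun x => h x)
    set y : ℂ ⊗[ℚ] V := ↑(f x₀) with hy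
    have hyU : y ∈ U := (f x₀).2
    have hyne : y ≠ 0 := fun h => hx₀ (Subtype.ext h)
    have hJne : annIdeal 𝒜 V y ≠ ⊤ := by
      intro h
      have h1 : (1 : ℂ ⊗[ℚ] 𝒜) ∈ annIdeal 𝒜 V y := h ▸ Submodule.mem_top
      rw [mem_annIdeal_iff, map_one, Module.End.one_apply] at h1
      exact hyne h1
    obtain ⟨m, hmmax, hJm⟩ := Ideal.exists_le_maximal _ hJne
    haveI := hmmax
    obtain ⟨τh, hker⟩ := exists_char_of_maximal 𝒜 m
    obtain ⟨e, he1, he2⟩ := exists_e (𝒜 := 𝒜) τh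
    set τ : 𝒜 →ₐ[ℚ] ℂ := algRestrict 𝒜 τh with hτ
    have heny : rho 𝒜 V e y ≠ 0 := by
      intro h
      have : e ∈ annIdeal 𝒜 V y := h
      have : τh e = 0 := hker (hJm this)
      rw [he2] at this
      exact one_ne_zero this
    -- U side
    have hz1 : rho 𝒜 V e y ∈ U ⊓ eigenspaceOf 𝒜 V τ :=
      Submodule.mem_inf.mpr ⟨U_inv hinv e y hyU, rho_e_eigen τh he1 y⟩
    -- sigma side
    have hx₁mem : rho 𝒜 V e ↑x₀ ∈ sigmaSub U := sigmaSub_inv hinv e ↑x₀ x₀.2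
    have hx₁ : rho 𝒜 V e ↑x₀ ∈ sigmaSub U ⊓ eigenspaceOf 𝒜 V τ :=
      Submodule.mem_inf.mpr ⟨hx₁mem, rho_e_eigen τh he1 _⟩
    have hfx₁ : (f ⟨rho 𝒜 V e ↑x₀, hx₁mem⟩ : ℂ ⊗[ℚ] V) = rho 𝒜 V e y :=
      comm_ext hinv f hcomm e x₀ hx₁mem
    have hx₁ne : rho 𝒜 V e ↑x₀ ≠ 0 := by
      intro h
      have h0 : (⟨rho 𝒜 V e ↑x₀, hx₁mem⟩ : sigmaSub U) = 0 := Subtype.ext h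
      rw [h0, map_zero] at hfx₁
      exact heny (by simpa using hfx₁.symm)
    rcases hsep τ with h | h
    · rw [h] at hz1
      exact heny (Submodule.mem_bot ℂ |>.mp hz1)
    · rw [h] at hx₁
      exact hx₁ne (Submodule.mem_bot ℂ |>.mp hx₁)

end
end

section
/- Let F be a number field acting on a nonzero finite-dimensional ℚ-vector space V (so V is an F-vector space), and let U be an F-invariant ℂ-subspace of V ⊗_ℚ ℂ such that V ⊗_ℚ ℂ is the internal direct sum of U and σ(U). If the only ℂ-linear map σ(U) → U commuting with the action of every element of F is the zero map, then F has no real embeddings: there is no ring homomorphism F → ℝ. -/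
open scoped TensorProduct

noncomputable section

section Aux

open Polynomial

lemma sigmaV_tmul {V : Type*} [AddCommGroup V] [Module ℚ V] (z : ℂ) (v : V) :
    sigmaV V (z ⊗ₜ[ℚ] v) = (starRingEnd ℂ) z ⊗ₜ[ℚ] v := rfl

lemma sigmaV_sigmaV {V : Type*} [AddCommGroup V] [Module ℚ V] (y : ℂ ⊗[ℚ] V) :
    sigmaV V (sigmaV V y) = y := by
  induction y using TensorProduct.induction_on with
  | zero => simp
  | tmul z v => rw [sigmaV_tmul, sigmaV_tmul]; simp
  | add a b ha hb => rw [map_add, map_add, ha, hb]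

lemma sigmaV_baseChange {V : Type*} [AddCommGroup V] [Module ℚ V]
    (f : V →ₗ[ℚ] V) (y : ℂ ⊗[ℚ] V) :
    sigmaV V (LinearMap.baseChange ℂ f y) = LinearMap.baseChange ℂ f (sigmaV V y) := by
  induction y using TensorProduct.induction_on with
  | zero => simp
  | tmul z v => rw [LinearMap.baseChange_tmul, sigmaV_tmul, sigmaV_tmul,
      LinearMap.baseChange_tmul]
  | add a b ha hb => rw [map_add, map_add, map_add, map_add, ha, hb]

/-- A root of the characteristic polynomial of an endomorphism of a finite-dimensional
vector space is an eigenvalue. -/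
lemma exists_eigenvector_of_isRoot_charpoly {K M : Type*} [Field K] [AddCommGroup M]
    [Module K M] [FiniteDimensional K M] (f : M →ₗ[K] M) (r : K)
    (h : f.charpoly.IsRoot r) : ∃ v : M, v ≠ 0 ∧ f v = r • v := by
  classical
  have hdet : LinearMap.det (r • (LinearMap.id : M →ₗ[K] M) - f) = 0 := by
    let b := Module.finBasis K M
    have hA : LinearMap.toMatrix b b (r • (LinearMap.id : M →ₗ[K] M) - f)
        = Matrix.scalar _ r - LinearMap.toMatrix b b f := by
      rw [map_sub, map_smul, LinearMap.toMatrix_id]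
      congr 1
      ext i j
      by_cases hij : i = j <;>
        simp [Matrix.scalar_apply, Matrix.one_apply, Matrix.diagonal_apply, hij]
    have hev : Matrix.det (Matrix.scalar _ r - LinearMap.toMatrix b b f)
        = Polynomial.eval r (LinearMap.toMatrix b b f).charpoly := by
      rw [Matrix.charpoly, eval_det, Matrix.matPolyEquiv_charmatrix]
      simp
    rw [← LinearMap.det_toMatrix b, hA, hev, LinearMap.charpoly_toMatrix, h.eq_zero]
  have hk := LinearMap.bot_lt_ker_of_det_eq_zero hdet
  obtain ⟨v, hv, hv0⟩ := (Submodule.ne_bot_iff _).mp (ne_of_gt hk)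
  refine ⟨v, hv0, ?_⟩
  have h2 : r • v - f v = 0 := by
    simpa [LinearMap.sub_apply] using hv
  rw [← sub_eq_zero]
  rw [sub_eq_zero] at h2
  rw [h2, sub_self]

end Aux

set_option maxHeartbeats 1000000 in
/-- If a number field `F` acts rigidly on a nonzero weight-one rational Hodge structure,
then `F` has no real embeddings. -/
theorem rigid_numberField_action_no_real_embedding
    (F : Type*) [Field F] [NumberField F]
    (V : Type*) [AddCommGroup V] [Module ℚ V] [FiniteDimensional ℚ V] [Nontrivial V]
    [Module F V] [IsScalarTower ℚ F V]
    (U : Submodule ℂ (ℂ ⊗[ℚ] V))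
    (hinv : ∀ x : F, ∀ v ∈ U, LinearMap.baseChange ℂ (smulLin F V x) v ∈ U)
    (hcompl : IsCompl U (sigmaSub U))
    (hrigid : ∀ f : sigmaSub U →ₗ[ℂ] U,
      (∀ x : F, CommutesWith (sigmaSub U) U f
        (LinearMap.baseChange ℂ (smulLin F V x))) → f = 0) :
    IsEmpty (F →+* ℝ) := by
  constructor
  intro φ
  classical
  -- The complex embedding obtained from `φ`.
  let τ : F →+* ℂ := Complex.ofRealHom.comp φ
  have hτre : ∀ x : F, (starRingEnd ℂ) (τ x) = τ x := fun x => Complex.conj_ofReal _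
  let τA : F →ₐ[ℚ] ℂ := τ.toRatAlgHom
  have hτA : ∀ x : F, τA x = τ x := fun _ => rfl
  -- The action of `F` on `V` as a `ℚ`-algebra morphism.
  let Φ₀ : F →ₐ[ℚ] Module.End ℚ V :=
    { toFun := fun x => smulLin F V x
      map_one' := LinearMap.ext fun v => one_smul F v
      map_mul' := fun x y => LinearMap.ext fun v => mul_smul x y v
      map_zero' := LinearMap.ext fun v => zero_smul F v
      map_add' := fun x y => LinearMap.ext fun v => add_smul x y v
      commutes' := fun q => LinearMap.ext fun v => by
        show (algebraMap ℚ F q) • v = _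
        rw [algebraMap_smul, Module.algebraMap_end_apply] }
  let Φ : F →ₐ[ℚ] Module.End ℂ (ℂ ⊗[ℚ] V) :=
    (Module.End.baseChangeHom ℚ ℂ V).comp Φ₀
  have hΦ : ∀ x : F, Φ x = LinearMap.baseChange ℂ (smulLin F V x) := fun _ => rfl
  -- A primitive element of `F`.
  obtain ⟨α, hα⟩ := Field.exists_primitive_element ℚ F
  set T : Module.End ℂ (ℂ ⊗[ℚ] V) := Φ α with hT
  set r : ℂ := τ α with hr
  -- `r` is a root of the characteristic polynomial of `T`.
  have hc0 : Polynomial.aeval α ((smulLin F V α).charpoly) = 0 := by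
    obtain ⟨v, hv⟩ := exists_ne (0 : V)
    have h1 : Polynomial.aeval (Φ₀ α) ((smulLin F V α).charpoly) = 0 :=
      LinearMap.aeval_self_charpoly _
    have h2 : Φ₀ (Polynomial.aeval α ((smulLin F V α).charpoly)) = 0 := by
      rw [← Polynomial.aeval_algHom_apply]; exact h1
    have h3 : (Polynomial.aeval α ((smulLin F V α).charpoly)) • v = 0 := by
      have := congrArg (fun g : Module.End ℚ V => g v) h2
      simpa [Φ₀, smulLin] using this
    rcases smul_eq_zero.mp h3 with h | h
    · exact h
    · exact absurd h hv
  have haev : ∀ c : Polynomial ℚ,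
      Polynomial.aeval r c = τA (Polynomial.aeval α c) := fun c =>
    Polynomial.aeval_algHom_apply τA α c
  have hroot : (((smulLin F V α).charpoly).map (algebraMap ℚ ℂ)).IsRoot r := by
    have h2 : Polynomial.aeval r ((smulLin F V α).charpoly) = 0 := by
      rw [haev, hc0, map_zero]
    rwa [Polynomial.IsRoot, Polynomial.eval_map, ← Polynomial.aeval_def]
  have hTch : T.charpoly = ((smulLin F V α).charpoly).map (algebraMap ℚ ℂ) :=
    LinearMap.charpoly_baseChange _ _
  obtain ⟨w, hw0, hweig⟩ :=
    exists_eigenvector_of_isRoot_charpoly T r (by rw [hTch]; exact hroot)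
  -- Polynomial evaluation on eigenvectors.
  have poly_eig : ∀ (g : Polynomial ℚ) (y : ℂ ⊗[ℚ] V), T y = r • y →
      Polynomial.aeval T g y = (Polynomial.aeval r g) • y := by
    intro g y hy
    induction g using Polynomial.induction_on with
    | C c =>
        rw [Polynomial.aeval_C, Polynomial.aeval_C, Module.algebraMap_end_apply,
          algebraMap_smul]
    | add p q hp hq =>
        rw [map_add, map_add, LinearMap.add_apply, hp, hq, add_smul]
    | monomial n c ih =>
        have hX : (Polynomial.C c * Polynomial.X ^ (n + 1) : Polynomial ℚ)
            = (Polynomial.C c * Polynomial.X ^ n) * Polynomial.X := by ring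
        have h1 : Polynomial.aeval T ((Polynomial.C c * Polynomial.X ^ n)
              * Polynomial.X) y
            = Polynomial.aeval T (Polynomial.C c * Polynomial.X ^ n) (T y) := by
          rw [map_mul, Polynomial.aeval_X, Module.End.mul_apply]
        rw [hX, h1, hy, map_smul, ih, smul_smul]
        congr 1
        conv_rhs => rw [map_mul, Polynomial.aeval_X]
        exact mul_comm _ _
  -- Every `x : F` acts on the `r`-eigenspace of `T` as the scalar `τ x`.
  have eig_all : ∀ (x : F) (y : ℂ ⊗[ℚ] V), T y = r • y → Φ x y = τ x • y := by
    intro x y hy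
    have hx : x ∈ IntermediateField.adjoin ℚ {α} := hα ▸ IntermediateField.mem_top
    obtain ⟨g, hg⟩ : ∃ g : Polynomial ℚ, Polynomial.aeval α g = x := by
      have hint : IsIntegral ℚ α := IsIntegral.of_finite ℚ α
      have h1 : x ∈ (IntermediateField.adjoin ℚ {α}).toSubalgebra := hx
      rw [IntermediateField.adjoin_simple_toSubalgebra_of_isAlgebraic hint.isAlgebraic,
        Algebra.adjoin_singleton_eq_range_aeval] at h1
      obtain ⟨g, hg⟩ := h1
      exact ⟨g, hg⟩
    have h2 : Φ x = Polynomial.aeval T g := by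
      rw [← hg, Polynomial.aeval_algHom_apply]
    have h3 : τ x = Polynomial.aeval r g := by
      rw [← hτA x, haev, hg]
    rw [h2, h3]
    exact poly_eig g y hy
  -- Stability of `U` and `σ(U)`.
  have hσst : ∀ (x : F) (s : ℂ ⊗[ℚ] V), s ∈ sigmaSub U → Φ x s ∈ sigmaSub U := by
    intro x s hs
    obtain ⟨u, hu, rfl⟩ := hs
    have h1 : LinearMap.baseChange ℂ (smulLin F V x) (sigmaV V u)
        = sigmaV V (LinearMap.baseChange ℂ (smulLin F V x) u) :=
      (sigmaV_baseChange _ _).symm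
    rw [hΦ, h1]
    exact Submodule.mem_map_of_mem (hinv x u hu)
  -- Decompose the eigenvector `w` along `U ⊕ σ(U)`.
  have hwtop : w ∈ U ⊔ sigmaSub U := by
    rw [hcompl.codisjoint.eq_top]; trivial
  obtain ⟨u, hu, s, hs, huw⟩ := Submodule.mem_sup.mp hwtop
  have hsum : (T u - r • u) + (T s - r • s) = 0 := by
    have h1 : T (u + s) = r • (u + s) := by rw [huw]; exact hweig
    rw [map_add, smul_add] at h1
    rw [sub_add_sub_comm, h1, sub_self]
  have hTu : T u = r • u := by
    have h1 : T u - r • u ∈ U := U.sub_mem (hinv α u hu) (U.smul_mem _ hu)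
    have h2 : T s - r • s ∈ sigmaSub U :=
      (sigmaSub U).sub_mem (hσst α s hs) ((sigmaSub U).smul_mem _ hs)
    have h3 : T u - r • u ∈ sigmaSub U := by
      rw [eq_neg_of_add_eq_zero_left hsum]
      exact (sigmaSub U).neg_mem h2
    have h4 : T u - r • u = 0 :=
      Submodule.disjoint_def.mp hcompl.disjoint _ h1 h3
    rw [sub_eq_zero] at h4; exact h4
  have hTs : T s = r • s := by
    have h1 : T s - r • s = 0 := by
      have := eq_neg_of_add_eq_zero_right hsum
      rw [this, hTu] ; simp
    rw [sub_eq_zero] at h1; exact h1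
  -- σ preserves the eigenspace (since r is real).
  have hσeig : ∀ y : ℂ ⊗[ℚ] V, T y = r • y → T (sigmaV V y) = r • sigmaV V y := by
    intro y hy
    have h1 : T (sigmaV V y) = sigmaV V (T y) := (sigmaV_baseChange _ _).symm
    rw [h1, hy, (sigmaV V).map_smulₛₗ, hr, hτre α]
  have hσ0 : ∀ y : ℂ ⊗[ℚ] V, sigmaV V y = 0 → y = 0 := by
    intro y h
    have := congrArg (sigmaV V) h
    rwa [sigmaV_sigmaV, map_zero] at this
  -- Produce nonzero eigenvectors in `U` and `σ(U)`.
  obtain ⟨u₀, w₀, hu₀U, hu₀0, hu₀e, hw₀σ, hw₀0, hw₀e⟩ :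
      ∃ u₀ w₀ : ℂ ⊗[ℚ] V, u₀ ∈ U ∧ u₀ ≠ 0 ∧ T u₀ = r • u₀ ∧
        w₀ ∈ sigmaSub U ∧ w₀ ≠ 0 ∧ T w₀ = r • w₀ := by
    by_cases hu0 : u = 0
    · have hs0 : s ≠ 0 := by
        intro h
        apply hw0
        rw [← huw, hu0, h, add_zero]
      refine ⟨sigmaV V s, s, ?_, fun h => hs0 (hσ0 s h), hσeig s hTs, hs, hs0, hTs⟩
      obtain ⟨u₁, hu₁, hu₁s⟩ := hs
      rw [← hu₁s, sigmaV_sigmaV]; exact hu₁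
    · exact ⟨u, sigmaV V u, hu, hu0, hTu, ⟨u, hu, rfl⟩,
        fun h => hu0 (hσ0 u h), hσeig u hTu⟩
  -- A projection onto the eigenspace, commuting with the action of `F`.
  set p : Polynomial ℚ := minpoly ℚ α with hp
  set pbar : Polynomial ℂ := p.map (algebraMap ℚ ℂ) with hpbar
  have hpT : Polynomial.aeval T pbar = 0 := by
    rw [hpbar, Polynomial.aeval_map_algebraMap, hT, Polynomial.aeval_algHom_apply,
      minpoly.aeval, map_zero]
  have hrp : pbar.IsRoot r := by
    have h2 : Polynomial.aeval r p = 0 := by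
      rw [haev, minpoly.aeval]; exact map_zero τA
    rwa [Polynomial.IsRoot, hpbar, Polynomial.eval_map, ← Polynomial.aeval_def]
  set q : Polynomial ℂ := pbar /ₘ (Polynomial.X - Polynomial.C r) with hq
  have hfac : (Polynomial.X - Polynomial.C r) * q = pbar :=
    (Polynomial.mul_divByMonic_eq_iff_isRoot).mpr hrp
  have hsep : pbar.Separable := Polynomial.Separable.map (Algebra.IsSeparable.isSeparable ℚ α)
  have hcop : IsCoprime (Polynomial.X - Polynomial.C r) q := by
    rw [← hfac] at hsep
    exact hsep.isCoprime
  obtain ⟨a, b, hab⟩ := hcop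
  set π : Module.End ℂ (ℂ ⊗[ℚ] V) := Polynomial.aeval T (b * q) with hπ
  have haevX : ∀ y : ℂ ⊗[ℚ] V,
      Polynomial.aeval T (Polynomial.X - Polynomial.C r) y = T y - r • y := by
    intro y
    rw [map_sub, Polynomial.aeval_X, Polynomial.aeval_C, LinearMap.sub_apply,
      Module.algebraMap_end_apply]
  have hπeig : ∀ y : ℂ ⊗[ℚ] V, T (π y) = r • (π y) := by
    intro y
    have h1 : Polynomial.aeval T ((Polynomial.X - Polynomial.C r) * (b * q)) y = 0 := by
      have hbp : (Polynomial.X - Polynomial.C r) * (b * q) = b * pbar := by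
        rw [← hfac]; ring
      rw [hbp, map_mul, Module.End.mul_apply, hpT, LinearMap.zero_apply, map_zero]
    rw [map_mul, Module.End.mul_apply] at h1
    have h2 := haevX (π y)
    rw [← hπ] at h1
    rw [h1] at h2
    rw [← sub_eq_zero, ← h2]
  have hπfix : ∀ y : ℂ ⊗[ℚ] V, T y = r • y → π y = y := by
    intro y hy
    have h1 : Polynomial.aeval T (a * (Polynomial.X - Polynomial.C r)) y = 0 := by
      rw [map_mul, Module.End.mul_apply, haevX y, hy, sub_self, map_zero]
    have h2 : Polynomial.aeval T (a * (Polynomial.X - Polynomial.C r)) y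
        + Polynomial.aeval T (b * q) y = y := by
      rw [← LinearMap.add_apply, ← map_add, hab, Polynomial.aeval_one,
        Module.End.one_apply]
    rw [h1, zero_add] at h2
    rw [hπ]
    exact h2
  -- `Φ x` commutes with polynomials in `T`.
  have hcommT : ∀ x : F, Φ x * T = T * Φ x := by
    intro x
    rw [hT, ← map_mul, ← map_mul, mul_comm x α]
  have hcomm : ∀ (g : Polynomial ℂ) (x : F),
      Φ x * Polynomial.aeval T g = Polynomial.aeval T g * Φ x := by
    intro g x
    induction g using Polynomial.induction_on with
    | C c =>
        rw [Polynomial.aeval_C]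
        exact (Algebra.commutes c (Φ x)).symm
    | add g₁ g₂ h₁ h₂ =>
        rw [map_add, mul_add, add_mul, h₁, h₂]
    | monomial n c ih =>
        have hX : (Polynomial.C c * Polynomial.X ^ (n + 1) : Polynomial ℂ)
            = (Polynomial.C c * Polynomial.X ^ n) * Polynomial.X := by ring
        rw [hX, map_mul, Polynomial.aeval_X, ← mul_assoc, ih, mul_assoc,
          hcommT x, ← mul_assoc]
  -- A linear functional with value 1 at `w₀`.
  obtain ⟨lam, hlam⟩ :=
    (LinearMap.toSpanSingleton ℂ (ℂ ⊗[ℚ] V) w₀).exists_leftInverse_of_injective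
      (LinearMap.ker_toSpanSingleton ℂ hw₀0)
  have hlamw₀ : lam w₀ = 1 := by
    have := congrArg (fun g : ℂ →ₗ[ℂ] ℂ => g 1) hlam
    simpa [LinearMap.toSpanSingleton_apply] using this
  -- The rigidity map.
  set fmap : sigmaSub U →ₗ[ℂ] U :=
    (lam.comp ((π : (ℂ ⊗[ℚ] V) →ₗ[ℂ] (ℂ ⊗[ℚ] V)).comp
      (sigmaSub U).subtype)).smulRight (⟨u₀, hu₀U⟩ : U) with hfmap
  have hfapply : ∀ y : sigmaSub U, (fmap y : ℂ ⊗[ℚ] V) = lam (π (y : ℂ ⊗[ℚ] V)) • u₀ := by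
    intro y
    rw [hfmap]
    rfl
  have hcw : ∀ x : F, CommutesWith (sigmaSub U) U fmap
      (LinearMap.baseChange ℂ (smulLin F V x)) := by
    intro x y hy
    rw [hfapply, hfapply]
    have h1 : π (LinearMap.baseChange ℂ (smulLin F V x) (y : ℂ ⊗[ℚ] V))
        = Φ x (π (y : ℂ ⊗[ℚ] V)) := by
      have := congrArg (fun g : Module.End ℂ (ℂ ⊗[ℚ] V) => g (y : ℂ ⊗[ℚ] V))
        (hcomm (b * q) x)
      simpa [Module.End.mul_apply, ← hπ, hΦ] using this.symm
    have h2 : Φ x (π (y : ℂ ⊗[ℚ] V)) = τ x • π (y : ℂ ⊗[ℚ] V) :=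
      eig_all x _ (hπeig _)
    have h3 : Φ x u₀ = τ x • u₀ := eig_all x u₀ hu₀e
    calc lam (π (LinearMap.baseChange ℂ (smulLin F V x) (y : ℂ ⊗[ℚ] V))) • u₀
        = lam (τ x • π (y : ℂ ⊗[ℚ] V)) • u₀ := by rw [h1, h2]
      _ = (τ x * lam (π (y : ℂ ⊗[ℚ] V))) • u₀ := by rw [map_smul, smul_eq_mul]
      _ = lam (π (y : ℂ ⊗[ℚ] V)) • (τ x • u₀) := by
          rw [smul_smul, mul_comm]
      _ = LinearMap.baseChange ℂ (smulLin F V x) (lam (π (y : ℂ ⊗[ℚ] V)) • u₀) := by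
          rw [map_smul, ← hΦ, h3]
  have hzero := hrigid fmap hcw
  have hval : (fmap ⟨w₀, hw₀σ⟩ : ℂ ⊗[ℚ] V) = u₀ := by
    rw [hfapply]
    show lam (π w₀) • u₀ = u₀
    rw [hπfix w₀ hw₀e, hlamw₀, one_smul]
  rw [hzero] at hval
  exact hu₀0 (by simpa using hval.symm)

end
end
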